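/- Let M : ℝⁿ → [0, ∞) be bounded on compact subsets of ℝⁿ, and let k > 0 and ρ > 1 be real numbers. If y ∈ ℝⁿ satisfies M(y) > 0, then there exists x ∈ ℝⁿ such that M(x) ≥ M(y) and M(z) ≤ ρ M(x) for all z in the closed ball of center x and radius k / M(x). -/

import Mathlib

/-- Doubling-type lemma (variant of Poláčik–Quittner–Souplet): if `M : ℝⁿ → [0,∞)`
is bounded on compact sets, `k > 0`, `ρ > 1` and `M(y) > 0`, then there is `x` with
`M(x) ≥ M(y)` such that `M ≤ ρ M(x)` on the closed ball of center `x` and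
radius `k / M(x)`. -/
theorem doubling_lemma (n : ℕ) (M : EuclideanSpace ℝ (Fin n) → ℝ)
    (hM0 : ∀ x, 0 ≤ M x)
    (hMb : ∀ K : Set (EuclideanSpace ℝ (Fin n)), IsCompact K → ∃ C : ℝ, ∀ x ∈ K, M x ≤ C)
    (k ρ : ℝ) (hk : 0 < k) (hρ : 1 < ρ)
    (y : EuclideanSpace ℝ (Fin n)) (hy : 0 < M y) :
    ∃ x : EuclideanSpace ℝ (Fin n), M y ≤ M x ∧
      ∀ z ∈ Metric.closedBall x (k / M x), M z ≤ ρ * M x := by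
  by_contra hcon
  push_neg at hcon
  have step : ∀ x : EuclideanSpace ℝ (Fin n), M y ≤ M x →
      ∃ z, dist z x ≤ k / M x ∧ ρ * M x < M z := by
    intro x hx
    obtain ⟨z, hz1, hz2⟩ := hcon x hx
    exact ⟨z, Metric.mem_closedBall.mp hz1, hz2⟩
  classical
  let F : EuclideanSpace ℝ (Fin n) → EuclideanSpace ℝ (Fin n) :=
    fun x => if h : M y ≤ M x then (step x h).choose else x
  let X : ℕ → EuclideanSpace ℝ (Fin n) := fun j => F^[j] y
  have hρ0 : (0:ℝ) < ρ := lt_trans one_pos hρ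
  have hr0 : (0:ℝ) ≤ ρ⁻¹ := le_of_lt (inv_pos.mpr hρ0)
  have hr1 : ρ⁻¹ < 1 := inv_lt_one_of_one_lt₀ hρ
  have key : ∀ j : ℕ, M y ≤ M (X j) ∧ ρ ^ j * M y ≤ M (X j) ∧
      dist (X j) y ≤ (k / M y) * ∑ i ∈ Finset.range j, (ρ⁻¹) ^ i := by
    intro j
    induction j with
    | zero =>
      refine ⟨le_refl _, by simp [X], ?_⟩
      simp [X]
    | succ j ih =>
      obtain ⟨h1, h2, h3⟩ := ih
      have hX : X (j+1) = F (X j) := Function.iterate_succ_apply' F j y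
      have hF : F (X j) = (step (X j) h1).choose := dif_pos h1
      obtain ⟨hd, hlt⟩ := (step (X j) h1).choose_spec
      rw [hX, hF]
      have hMpos : 0 < M (X j) := lt_of_lt_of_le hy h1
      have hpow : 0 < ρ ^ j * M y := mul_pos (pow_pos hρ0 j) hy
      constructor
      · calc M y ≤ M (X j) := h1
          _ ≤ ρ * M (X j) := le_mul_of_one_le_left (hM0 _) (le_of_lt hρ)
          _ ≤ M ((step (X j) h1).choose) := le_of_lt hlt
      constructor
      · calc ρ ^ (j+1) * M y = ρ * (ρ ^ j * M y) := by ring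
          _ ≤ ρ * M (X j) := by nlinarith
          _ ≤ M ((step (X j) h1).choose) := le_of_lt hlt
      · have hd2 : k / M (X j) ≤ (k / M y) * (ρ⁻¹) ^ j := by
          rw [div_le_iff₀ hMpos]
          have : (k / M y) * (ρ⁻¹) ^ j * (ρ ^ j * M y) = k := by
            field_simp
            rw [← mul_pow, one_div, inv_mul_cancel₀ hρ0.ne', one_pow]
          nlinarith [mul_pos (mul_pos (div_pos hk hy) (pow_pos (inv_pos.mpr hρ0) j)) hpow]
        calc dist ((step (X j) h1).choose) y
            ≤ dist ((step (X j) h1).choose) (X j) + dist (X j) y := dist_triangle _ _ _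
          _ ≤ (k / M y) * (ρ⁻¹) ^ j + (k / M y) * ∑ i ∈ Finset.range j, (ρ⁻¹) ^ i := by
              exact add_le_add (le_trans hd hd2) h3
          _ = (k / M y) * ∑ i ∈ Finset.range (j+1), (ρ⁻¹) ^ i := by
              rw [Finset.sum_range_succ]; ring
  have hsum : ∀ j : ℕ, ∑ i ∈ Finset.range j, (ρ⁻¹) ^ i ≤ (1 - ρ⁻¹)⁻¹ := by
    intro j
    have := Summable.sum_le_tsum (Finset.range j) (fun i _ => pow_nonneg hr0 i)
      (summable_geometric_of_lt_one hr0 hr1)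
    rwa [tsum_geometric_of_lt_one hr0 hr1] at this
  set R := (k / M y) * (1 - ρ⁻¹)⁻¹ with hR
  have hmem : ∀ j, X j ∈ Metric.closedBall y R := by
    intro j
    rw [Metric.mem_closedBall]
    calc dist (X j) y ≤ (k / M y) * ∑ i ∈ Finset.range j, (ρ⁻¹) ^ i := (key j).2.2
      _ ≤ R := by
          apply mul_le_mul_of_nonneg_left (hsum j) (le_of_lt (div_pos hk hy))
  obtain ⟨C, hC⟩ := hMb (Metric.closedBall y R) (isCompact_closedBall y R)
  obtain ⟨j, hj⟩ := pow_unbounded_of_one_lt (C / M y) hρ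
  have : C < ρ ^ j * M y := by
    rwa [div_lt_iff₀ hy] at hj
  have hle : ρ ^ j * M y ≤ C := le_trans (key j).2.1 (hC _ (hmem j))
  linarith
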